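/- Let f be a polynomial vector field and H = ⋃_{i=1}^I ⋂_{j=1}^{J_i} {x : p_{ij}(x) ▷ 0} with ▷ ∈ {≥,>} a semi-algebraic set in disjunctive normal form. Then In_f(H) = ⋃_{i=1}^I ⋂_{j=1}^{J_i} In_f({x : p_{ij}(x) ▷ 0}). In particular, In_f commutes with the finite unions and intersections in this DNF representation. -/

import Mathlib

open MvPolynomial Set

lemma eval_hasDerivAt {n : ℕ} (f : Fin n → MvPolynomial (Fin n) ℝ)
    (x : ℝ → Fin n → ℝ) (t : ℝ)
    (hx : ∀ i, HasDerivAt (fun s => x s i) (MvPolynomial.eval (x t) (f i)) t)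
    (q : MvPolynomial (Fin n) ℝ) :
    HasDerivAt (fun s => MvPolynomial.eval (x s) q)
      (MvPolynomial.eval (x t) (∑ j, f j * pderiv j q)) t := by
  induction q using MvPolynomial.induction_on with
  | C a =>
      simp only [eval_C, pderiv_C, mul_zero, Finset.sum_const_zero, map_zero]
      exact hasDerivAt_const t a
  | add q r hq hr =>
      convert hq.add hr using 1
      · rfl
      · rfl
      · ext s; simp
      · simp [mul_add, Finset.sum_add_distrib]
  | mul_X q j hq =>
      have h := hq.mul (hx j)
      convert h using 1
      · rfl
      · rfl
      · ext s; simp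
      · symm
        simp only [pderiv_mul, pderiv_X, mul_add, Finset.sum_add_distrib, map_add, map_sum,
          map_mul, eval_X, Pi.single_apply, apply_ite, map_one, map_zero, mul_ite, mul_one,
          mul_zero, Finset.sum_ite_eq', Finset.mem_univ, if_true]
        rw [Finset.sum_mul]
        have key : (∑ k : Fin n, if j = k then (MvPolynomial.eval (x t)) (f k) *
                ((MvPolynomial.eval (x t)) ((pderiv k) q) * x t j) +
                (MvPolynomial.eval (x t)) (f k) * (MvPolynomial.eval (x t)) q
              else (MvPolynomial.eval (x t)) (f k) *
                ((MvPolynomial.eval (x t)) ((pderiv k) q) * x t j) + 0)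
            = (∑ k : Fin n, (MvPolynomial.eval (x t)) (f k) *
                ((MvPolynomial.eval (x t)) ((pderiv k) q) * x t j)) +
              (MvPolynomial.eval (x t)) (f j) * (MvPolynomial.eval (x t)) q := by
          rw [Finset.sum_congr rfl
              (g := fun k => (MvPolynomial.eval (x t)) (f k) *
                ((MvPolynomial.eval (x t)) ((pderiv k) q) * x t j) +
                if j = k then (MvPolynomial.eval (x t)) (f k) * (MvPolynomial.eval (x t)) q
                else 0)
              (fun k _ => by split <;> simp_all),
            Finset.sum_add_distrib, Finset.sum_ite_eq, if_pos (Finset.mem_univ j)]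
        rw [key]
        congr 1
        · exact Finset.sum_congr rfl fun k _ => (mul_assoc _ _ _)
        · exact mul_comm _ _

/-- Noetherian: some Lie-derivative chain element is a combination of earlier ones. -/
lemma exists_rep {n : ℕ} (P : ℕ → MvPolynomial (Fin n) ℝ) :
    ∃ (N : ℕ) (c : Fin N → MvPolynomial (Fin n) ℝ),
      P N = ∑ i : Fin N, c i * P i := by
  have hinst : IsNoetherian (MvPolynomial (Fin n) ℝ) (MvPolynomial (Fin n) ℝ) :=
    isNoetherianRing_iff.mp inferInstance
  obtain ⟨N, hN⟩ := monotone_stabilizes_iff_noetherian.mpr hinst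
    ⟨fun k => Ideal.span (P '' Set.Iio k),
      fun a b hab => Ideal.span_mono (Set.image_mono (Set.Iio_subset_Iio hab))⟩
  have h1 : P N ∈ Ideal.span (P '' Set.Iio (N + 1)) :=
    Ideal.subset_span ⟨N, by simp, rfl⟩
  have h2 : P N ∈ Ideal.span (P '' Set.Iio N) := by
    have := hN (N + 1) (Nat.le_succ N)
    change Ideal.span (P '' Set.Iio N) = Ideal.span (P '' Set.Iio (N + 1)) at this
    rwa [this]
  have himg : P '' Set.Iio N = Set.range (fun i : Fin N => P i) := by
    ext q
    constructor
    · rintro ⟨m, hm, rfl⟩; exact ⟨⟨m, hm⟩, rfl⟩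
    · rintro ⟨i, rfl⟩; exact ⟨i, i.2, rfl⟩
  rw [himg, Ideal.mem_span_range_iff_exists_fun] at h2
  obtain ⟨c, hc⟩ := h2
  exact ⟨N, c, hc.symm⟩

/-- If the first `m` functions in a derivative chain vanish at `0` and the `m`-th is
positive on `(0, ε)`, then the `0`-th is positive on `(0, ε)`. -/
lemma chain_pos_aux (ε : ℝ) (hε : 0 < ε) :
    ∀ (m : ℕ) (g : ℕ → ℝ → ℝ), (∀ k t, HasDerivAt (g k) (g (k + 1) t) t) →
      (∀ i < m, g i 0 = 0) → (∀ t ∈ Set.Ioo 0 ε, 0 < g m t) →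
      ∀ t ∈ Set.Ioo 0 ε, 0 < g 0 t := by
  intro m
  induction m with
  | zero => intro g _ _ hm t ht; exact hm t ht
  | succ m ih =>
    intro g hd h0 hm
    have h1 : ∀ t ∈ Set.Ioo 0 ε, 0 < g 1 t :=
      ih (fun i => g (i + 1)) (fun k t => hd (k + 1) t)
        (fun i hi => h0 (i + 1) (by omega)) hm
    have hc : ContinuousOn (g 0) (Set.Ico 0 ε) :=
      fun t _ => ((hd 0 t).continuousAt).continuousWithinAt
    have hmono : StrictMonoOn (g 0) (Set.Ico 0 ε) := by
      apply strictMonoOn_of_deriv_pos (convex_Ico 0 ε) hc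
      intro t ht
      rw [interior_Ico] at ht
      rw [(hd 0 t).deriv]
      exact h1 t ht
    intro t ht
    have h2 := hmono ⟨le_refl 0, hε⟩ ⟨ht.1.le, ht.2⟩ ht.1
    have h3 : g 0 0 = 0 := h0 0 (Nat.succ_pos m)
    linarith

lemma chain_pos (g : ℕ → ℝ → ℝ) (hd : ∀ k t, HasDerivAt (g k) (g (k + 1) t) t)
    (k : ℕ) (h0 : ∀ i < k, g i 0 = 0) (hk : 0 < g k 0) :
    ∃ ε > 0, ∀ t ∈ Set.Ioo (0 : ℝ) ε, 0 < g 0 t := by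
  have hcont : ContinuousAt (g k) 0 := (hd k 0).continuousAt
  have hmem : {y : ℝ | 0 < g k y} ∈ nhds (0 : ℝ) :=
    hcont.preimage_mem_nhds (IsOpen.mem_nhds isOpen_Ioi hk)
  obtain ⟨ε, hε, hball⟩ := Metric.mem_nhds_iff.mp hmem
  refine ⟨ε, hε, ?_⟩
  apply chain_pos_aux ε hε k g hd h0
  intro t ht
  exact hball (by simp [Real.dist_eq, abs_of_pos ht.1, ht.2] : t ∈ Metric.ball (0:ℝ) ε)

lemma chain_sign (g : ℕ → ℝ → ℝ) (hd : ∀ k t, HasDerivAt (g k) (g (k + 1) t) t)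
    (k : ℕ) (h0 : ∀ i < k, g i 0 = 0) (hk : g k 0 ≠ 0) :
    (∃ ε > 0, ∀ t ∈ Set.Ioo (0 : ℝ) ε, 0 < g 0 t) ∨
      (∃ ε > 0, ∀ t ∈ Set.Ioo (0 : ℝ) ε, g 0 t < 0) := by
  rcases hk.lt_or_gt with h | h
  · right
    obtain ⟨ε, hε, h'⟩ := chain_pos (fun i t => -(g i t))
      (fun i t => (hd i t).neg) k (fun i hi => by simp [h0 i hi]) (by simpa using h)
    exact ⟨ε, hε, fun t ht => by have := h' t ht; linarith⟩
  · left
    exact chain_pos g hd k h0 h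
open Set

/-- Linear ODE with continuous coefficients: if a derivative chain satisfies a linear
relation and vanishes to order `N` at `0`, it vanishes identically on `[0,1]`. -/
lemma chain_zero (g : ℕ → ℝ → ℝ) (hd : ∀ k t, HasDerivAt (g k) (g (k + 1) t) t)
    (N : ℕ) (a : Fin N → ℝ → ℝ) (ha : ∀ i, Continuous (a i))
    (hrel : ∀ t, g N t = ∑ i, a i t * g i t)
    (h0 : ∀ i < N, g i 0 = 0) :
    ∀ t ∈ Set.Icc (0 : ℝ) 1, g 0 t = 0 := by
  rcases Nat.eq_zero_or_pos N with hN | hN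
  · subst hN
    intro t _
    simpa using hrel t
  -- clamp time to [0,1] so coefficients are globally bounded
  set cl : ℝ → ℝ := fun t => max 0 (min t 1) with hcl
  have hclmem : ∀ t, cl t ∈ Set.Icc (0:ℝ) 1 :=
    fun t => ⟨le_max_left _ _, max_le (by norm_num) (min_le_right _ _)⟩
  have hcleq : ∀ t ∈ Set.Icc (0:ℝ) 1, cl t = t := by
    intro t ht
    simp only [hcl]
    rw [min_eq_left ht.2, max_eq_right ht.1]
  -- bounds for coefficients
  have hbd : ∀ i : Fin N, ∃ C : ℝ, ∀ y ∈ Set.Icc (0:ℝ) 1, ‖a i y‖ ≤ C := by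
    intro i
    obtain ⟨C, hC⟩ := (isCompact_Icc (a := (0:ℝ)) (b := 1)).exists_bound_of_continuousOn
      ((ha i).continuousOn)
    exact ⟨C, hC⟩
  choose C hC using hbd
  have hCnonneg : ∀ i, 0 ≤ C i := fun i => le_trans (norm_nonneg _) (hC i 0 (by norm_num))
  set Kr : ℝ := max 1 (∑ i, C i) with hKr
  have hKr1 : (1:ℝ) ≤ Kr := le_max_left _ _
  have hKrS : (∑ i, C i) ≤ Kr := le_max_right _ _
  have hKrpos : (0:ℝ) ≤ Kr := le_trans zero_le_one hKr1
  set K : NNReal := ⟨Kr, hKrpos⟩ with hK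
  -- the linear vector field
  set v : ℝ → (Fin N → ℝ) → (Fin N → ℝ) := fun t y k =>
    if h : (k : ℕ) + 1 < N then y ⟨k + 1, h⟩ else ∑ i, a i (cl t) * y i with hv
  have hlip : ∀ t, LipschitzWith K (v t) := by
    intro t
    apply LipschitzWith.of_dist_le_mul
    intro y y'
    have hnn : (0:ℝ) ≤ (K : ℝ) * dist y y' := mul_nonneg hKrpos dist_nonneg
    rw [dist_pi_le_iff hnn]
    intro k
    simp only [hv]
    split
    · calc dist (y ⟨(k:ℕ)+1, by assumption⟩) (y' ⟨(k:ℕ)+1, by assumption⟩)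
          ≤ dist y y' := dist_le_pi_dist y y' _
        _ ≤ (K:ℝ) * dist y y' := le_mul_of_one_le_left dist_nonneg hKr1
    · rw [Real.dist_eq]
      have : (∑ i, a i (cl t) * y i) - (∑ i, a i (cl t) * y' i)
          = ∑ i, a i (cl t) * (y i - y' i) := by
        rw [← Finset.sum_sub_distrib]
        exact Finset.sum_congr rfl fun i _ => by ring
      rw [this]
      calc |∑ i, a i (cl t) * (y i - y' i)| ≤ ∑ i, |a i (cl t) * (y i - y' i)| :=
            Finset.abs_sum_le_sum_abs _ _
        _ ≤ ∑ i, C i * dist y y' := by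
            apply Finset.sum_le_sum
            intro i _
            rw [abs_mul]
            have h1 : |a i (cl t)| ≤ C i := hC i (cl t) (hclmem t)
            have h2 : |y i - y' i| ≤ dist y y' := by
              rw [← Real.dist_eq]; exact dist_le_pi_dist y y' i
            exact mul_le_mul h1 h2 (abs_nonneg _) (hCnonneg i)
        _ = (∑ i, C i) * dist y y' := by rw [Finset.sum_mul]
        _ ≤ (K:ℝ) * dist y y' := mul_le_mul_of_nonneg_right hKrS dist_nonneg
  -- the solution Y and the zero solution
  set Y : ℝ → (Fin N → ℝ) := fun t i => g i t with hY
  have hYd : ∀ t ∈ Set.Ico (0:ℝ) 1, HasDerivWithinAt Y (v t (Y t)) (Set.Ici t) t := by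
    intro t ht
    have h1 : HasDerivAt Y (fun k : Fin N => g ((k:ℕ) + 1) t) t :=
      hasDerivAt_pi.2 fun k => hd k t
    have h2 : v t (Y t) = fun k : Fin N => g ((k:ℕ) + 1) t := by
      funext k
      simp only [hv, hY]
      split
      · rfl
      · have hk1 : (k:ℕ) + 1 = N := by omega
        rw [hcleq t ⟨ht.1, ht.2.le⟩, ← hrel t, hk1]
    rw [h2]
    exact h1.hasDerivWithinAt
  have hYc : ContinuousOn Y (Set.Icc (0:ℝ) 1) := by
    have : ∀ i : Fin N, Continuous (g i) := fun i =>
      (fun t => (hd i t).continuousAt) |> continuous_iff_continuousAt.mpr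
    exact (continuous_pi fun i : Fin N => this i).continuousOn
  have hzero : ∀ t, v t (0 : Fin N → ℝ) = 0 := by
    intro t
    funext k
    simp only [hv]
    split <;> simp
  have h0' : Y 0 = 0 := by
    funext i
    exact h0 i i.2
  have := ODE_solution_unique_of_mem_Icc_right
    (v := v) (s := fun _ => Set.univ) (K := K)
    (fun t _ => (hlip t).lipschitzOnWith)
    hYc hYd (fun _ _ => trivial)
    (continuousOn_const (c := (0 : Fin N → ℝ)))
    (fun t _ => by
      rw [hzero t]
      exact (hasDerivAt_const t (0 : Fin N → ℝ)).hasDerivWithinAt)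
    (fun _ _ => trivial) h0'
  intro t ht
  have := this ht
  have h5 : Y t ⟨0, hN⟩ = 0 := by rw [this]; rfl
  exact h5

/-- Trichotomy: along a trajectory of a polynomial vector field, the sign of a
polynomial is eventually constant (or zero) just after time `0`. -/
lemma trichotomy {n : ℕ} (f : Fin n → MvPolynomial (Fin n) ℝ)
    (φ : (Fin n → ℝ) → ℝ → (Fin n → ℝ))
    (hφ : (∀ x₀, φ x₀ 0 = x₀) ∧ ∀ x₀ t (i : Fin n),
      HasDerivAt (fun s => φ x₀ s i) (MvPolynomial.eval (φ x₀ t) (f i)) t)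
    (x₀ : Fin n → ℝ) (p : MvPolynomial (Fin n) ℝ) :
    (∃ ε > 0, ∀ t ∈ Set.Ioo (0:ℝ) ε, 0 < MvPolynomial.eval (φ x₀ t) p) ∨
      (∃ ε > 0, ∀ t ∈ Set.Ioo (0:ℝ) ε, MvPolynomial.eval (φ x₀ t) p < 0) ∨
      (∃ ε > 0, ∀ t ∈ Set.Ioo (0:ℝ) ε, MvPolynomial.eval (φ x₀ t) p = 0) := by
  classical
  let L : MvPolynomial (Fin n) ℝ → MvPolynomial (Fin n) ℝ := fun q => ∑ j, f j * pderiv j q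
  let P : ℕ → MvPolynomial (Fin n) ℝ := fun k => L^[k] p
  let g : ℕ → ℝ → ℝ := fun k t => MvPolynomial.eval (φ x₀ t) (P k)
  have hP0 : P 0 = p := rfl
  have hPsucc : ∀ k, P (k + 1) = L (P k) := fun k => Function.iterate_succ_apply' L k p
  have hd : ∀ k t, HasDerivAt (g k) (g (k + 1) t) t := by
    intro k t
    have h := eval_hasDerivAt f (φ x₀) t (fun i => hφ.2 x₀ t i) (P k)
    show HasDerivAt (fun s => MvPolynomial.eval (φ x₀ s) (P k))
      (MvPolynomial.eval (φ x₀ t) (P (k + 1))) t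
    rw [hPsucc k]
    exact h
  have hg0 : ∀ k, g k 0 = MvPolynomial.eval x₀ (P k) := by
    intro k; show MvPolynomial.eval (φ x₀ 0) (P k) = _; rw [hφ.1 x₀]
  obtain ⟨N, c, hc⟩ := exists_rep P
  by_cases hall : ∀ i, i < N → MvPolynomial.eval x₀ (P i) = 0
  · right; right
    refine ⟨1, one_pos, fun t ht => ?_⟩
    have hcont : ∀ i : Fin N, Continuous (fun t => MvPolynomial.eval (φ x₀ t) (c i)) := by
      intro i
      exact continuous_iff_continuousAt.mpr fun t =>
        (eval_hasDerivAt f (φ x₀) t (fun j => hφ.2 x₀ t j) (c i)).continuousAt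
    have hrel : ∀ t, g N t = ∑ i : Fin N, MvPolynomial.eval (φ x₀ t) (c i) * g i t := by
      intro t
      show MvPolynomial.eval (φ x₀ t) (P N) = _
      rw [hc, map_sum]
      exact Finset.sum_congr rfl fun i _ => by rw [map_mul]
    have hz := chain_zero g hd N (fun i t => MvPolynomial.eval (φ x₀ t) (c i)) hcont hrel
      (fun i hi => by rw [hg0]; exact hall i hi)
    have := hz t ⟨ht.1.le, ht.2.le⟩
    rw [show g 0 t = MvPolynomial.eval (φ x₀ t) p from rfl] at this
    exact this
  · push_neg at hall
    have hex : ∃ k, MvPolynomial.eval x₀ (P k) ≠ 0 :=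
      ⟨hall.choose, hall.choose_spec.2⟩
    have hk : MvPolynomial.eval x₀ (P (Nat.find hex)) ≠ 0 := Nat.find_spec hex
    have h0 : ∀ i < Nat.find hex, g i 0 = 0 := by
      intro i hi
      rw [hg0]
      by_contra h
      exact (Nat.find_min hex hi) h
    rcases chain_sign g hd (Nat.find hex) h0 (by rw [hg0]; exact hk) with h | h
    · exact Or.inl h
    · exact Or.inr (Or.inl h)

/-- `φ` is a global flow of the polynomial vector field `f`. -/
def IsPolyFlow {n : ℕ} (f : Fin n → MvPolynomial (Fin n) ℝ)
    (φ : (Fin n → ℝ) → ℝ → (Fin n → ℝ)) : Prop :=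
  (∀ x₀, φ x₀ 0 = x₀) ∧
    ∀ x₀ t (i : Fin n),
      HasDerivAt (fun s => φ x₀ s i) (MvPolynomial.eval (φ x₀ t) (f i)) t

/-- `In_f(A)`: points whose forward trajectory enters `A` immediately. -/
def InSet {n : ℕ} (φ : (Fin n → ℝ) → ℝ → (Fin n → ℝ)) (A : Set (Fin n → ℝ)) :
    Set (Fin n → ℝ) :=
  {x₀ | ∃ ε > 0, ∀ t ∈ Set.Ioo (0:ℝ) ε, φ x₀ t ∈ A}

/-- `Out_f(A)`: points whose forward trajectory leaves `A` immediately. -/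
def OutSet {n : ℕ} (φ : (Fin n → ℝ) → ℝ → (Fin n → ℝ)) (A : Set (Fin n → ℝ)) :
    Set (Fin n → ℝ) :=
  {x₀ | ∃ ε > 0, ∀ t ∈ Set.Ioo (0:ℝ) ε, φ x₀ t ∉ A}

/-- The atomic semi-algebraic set `{x | p(x) ▷ 0}` where `▷` is `>` if `strict`
and `≥` otherwise. -/
def atomSet {n : ℕ} (p : MvPolynomial (Fin n) ℝ) (strict : Bool) :
    Set (Fin n → ℝ) :=
  if strict then {x | 0 < MvPolynomial.eval x p} else {x | 0 ≤ MvPolynomial.eval x p}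

/-- Dichotomy: each initial point either enters or leaves an atomic
semi-algebraic set immediately. -/
lemma atom_dichotomy {n : ℕ} (f : Fin n → MvPolynomial (Fin n) ℝ)
    (φ : (Fin n → ℝ) → ℝ → (Fin n → ℝ)) (hφ : IsPolyFlow f φ)
    (x₀ : Fin n → ℝ) (q : MvPolynomial (Fin n) ℝ) (b : Bool) :
    x₀ ∈ InSet φ (atomSet q b) ∨ x₀ ∈ OutSet φ (atomSet q b) := by
  rcases trichotomy f φ hφ x₀ q with ⟨ε, hε, h⟩ | ⟨ε, hε, h⟩ | ⟨ε, hε, h⟩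
  · left
    refine ⟨ε, hε, fun t ht => ?_⟩
    cases b
    · exact (h t ht).le
    · exact h t ht
  · right
    refine ⟨ε, hε, fun t ht => ?_⟩
    cases b
    · exact not_le.mpr (h t ht)
    · exact not_lt.mpr (h t ht).le
  · cases b
    · left
      exact ⟨ε, hε, fun t ht => (h t ht).ge⟩
    · right
      exact ⟨ε, hε, fun t ht => by simp [atomSet, h t ht]⟩

/-- `InSet` is closed under finite intersections (one inclusion). -/
lemma mem_inSet_iInter {n : ℕ} (φ : (Fin n → ℝ) → ℝ → (Fin n → ℝ))
    {ι : Type*} [Fintype ι] (A : ι → Set (Fin n → ℝ)) (x₀ : Fin n → ℝ)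
    (h : ∀ j, x₀ ∈ InSet φ (A j)) : x₀ ∈ InSet φ (⋂ j, A j) := by
  classical
  choose ε hpos hε using h
  set E : Finset ℝ := insert 1 (Finset.image ε Finset.univ) with hE
  have hne : E.Nonempty := ⟨1, Finset.mem_insert_self _ _⟩
  have hδpos : 0 < E.min' hne := by
    rcases Finset.mem_insert.mp (E.min'_mem hne) with h1 | h1
    · rw [h1]; exact one_pos
    · obtain ⟨j, _, hj⟩ := Finset.mem_image.mp h1
      rw [← hj]; exact hpos j
  refine ⟨E.min' hne, hδpos, fun t ht => Set.mem_iInter.2 fun j => ?_⟩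
  refine hε j t ⟨ht.1, lt_of_lt_of_le ht.2 (E.min'_le (ε j) ?_)⟩
  exact Finset.mem_insert_of_mem (Finset.mem_image_of_mem ε (Finset.mem_univ j))

/-- `In_f` commutes with the finite unions and intersections in a DNF
representation of a semi-algebraic set. -/
theorem in_set_dnf
    {n I : ℕ} (f : Fin n → MvPolynomial (Fin n) ℝ)
    (φ : (Fin n → ℝ) → ℝ → (Fin n → ℝ)) (hφ : IsPolyFlow f φ)
    (J : Fin I → ℕ)
    (p : ∀ i : Fin I, Fin (J i) → MvPolynomial (Fin n) ℝ)
    (rel : ∀ i : Fin I, Fin (J i) → Bool) :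
    InSet φ (⋃ i, ⋂ j, atomSet (p i j) (rel i j))
      = ⋃ i, ⋂ j, InSet φ (atomSet (p i j) (rel i j)) := by
  classical
  apply Set.Subset.antisymm
  · intro x₀ hx₀
    by_cases hex : ∃ i, ∀ j, x₀ ∈ InSet φ (atomSet (p i j) (rel i j))
    · obtain ⟨i, hi⟩ := hex
      exact Set.mem_iUnion.2 ⟨i, Set.mem_iInter.2 hi⟩
    · exfalso
      push_neg at hex
      have hout : ∀ i, ∃ j, x₀ ∈ OutSet φ (atomSet (p i j) (rel i j)) := by
        intro i
        obtain ⟨j, hj⟩ := hex i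
        exact ⟨j, (atom_dichotomy f φ hφ x₀ (p i j) (rel i j)).resolve_left hj⟩
      choose jj hjj using hout
      choose εo hεo using hjj
      obtain ⟨ε₀, hε₀, h₀⟩ := hx₀
      set E : Finset ℝ := insert ε₀ (Finset.image εo Finset.univ) with hE
      have hne : E.Nonempty := ⟨ε₀, Finset.mem_insert_self _ _⟩
      set δ := E.min' hne with hδ
      have hδpos : 0 < δ := by
        rcases Finset.mem_insert.mp (E.min'_mem hne) with h1 | h1
        · rw [hδ, h1]; exact hε₀
        · obtain ⟨i, _, hi⟩ := Finset.mem_image.mp h1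
          rw [hδ, ← hi]; exact (hεo i).1
      have htmem : δ / 2 ∈ Set.Ioo (0:ℝ) ε₀ := by
        constructor
        · linarith
        · have : δ ≤ ε₀ := E.min'_le ε₀ (Finset.mem_insert_self _ _)
          linarith
      obtain ⟨i, hi⟩ := Set.mem_iUnion.mp (h₀ (δ / 2) htmem)
      have hmem := Set.mem_iInter.mp hi (jj i)
      refine (hεo i).2 (δ / 2) ⟨htmem.1, ?_⟩ hmem
      have : δ ≤ εo i := E.min'_le (εo i)
        (Finset.mem_insert_of_mem (Finset.mem_image_of_mem εo (Finset.mem_univ i)))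
      linarith
  · intro x₀ hx₀
    obtain ⟨i, hi⟩ := Set.mem_iUnion.mp hx₀
    have h1 : x₀ ∈ InSet φ (⋂ j, atomSet (p i j) (rel i j)) :=
      mem_inSet_iInter φ _ x₀ (Set.mem_iInter.mp hi)
    obtain ⟨ε, hε, h⟩ := h1
    exact ⟨ε, hε, fun t ht => Set.mem_iUnion.2 ⟨i, h t ht⟩⟩
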